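/- arXiv:1705.05110 — 5 statements merged into one kernel-verified Lean document; each statement's English description precedes it below -/
import Mathlib

section
/- Let K be a CM field with totally real subfield K₀ and g = [K₀:ℚ], and let Φ̄ be a CM half-set of embeddings of K. Suppose x ∈ K and φ ∈ ℂ \ ℝ satisfy ρ(x) = φ for every ρ ∈ Φ̄. Then the minimal polynomial of φ over ℚ has degree 2 (so ℚ(φ) is a quadratic imaginary field), and the minimal polynomial of x over ℚ also has degree 2 and is equal to that of φ. -/
/-- Let `K` be a CM field with totally real subfield `K₀` and `g = [K₀:ℚ]`,
and let `Φ` be a CM half-set of embeddings of `K`.  Suppose `x ∈ K` and `φ ∈ ℂ \ ℝ` satisfy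
`ρ(x) = φ` for every `ρ ∈ Φ`.  Then the minimal polynomial of `φ` over `ℚ` has degree 2
(so `ℚ(φ)` is a quadratic imaginary field), and the minimal polynomial of `x` over `ℚ`
also has degree 2 and is equal to that of `φ`. -/
theorem stmt0 (K₀ K : Type*) [Field K₀] [Field K] [NumberField K₀] [NumberField K]
    [Algebra K₀ K]
    -- K₀ is totally real
    (htotreal : ∀ σ : K₀ →+* ℂ, ∀ a : K₀, (σ a).im = 0)
    -- [K : K₀] = 2
    (hdeg2 : Module.finrank K₀ K = 2)
    -- K is totally imaginary
    (htotim : ∀ ρ : K →+* ℂ, ∃ a : K, (ρ a).im ≠ 0)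
    -- Φ is a CM half-set: it contains exactly one of each conjugate pair of embeddings
    (Φ : Finset (K →+* ℂ))
    (hΦ : ∀ ρ : K →+* ℂ, ρ ∈ Φ ↔ (starRingEnd ℂ).comp ρ ∉ Φ)
    (x : K) (φ : ℂ) (hφ : φ.im ≠ 0)
    (hx : ∀ ρ ∈ Φ, ρ x = φ) :
    (minpoly ℚ φ).natDegree = 2 ∧ (minpoly ℚ x).natDegree = 2 ∧
      minpoly ℚ x = minpoly ℚ φ := by
  have hconj : φ ≠ (starRingEnd ℂ) φ := by
    intro h
    exact hφ (Complex.conj_eq_iff_im.mp h.symm)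
  obtain ⟨ρ0⟩ : Nonempty (K →+* ℂ) := inferInstance
  obtain ⟨ρ, hρ⟩ : ∃ ρ : K →+* ℂ, ρ ∈ Φ := by
    by_cases h : ρ0 ∈ Φ
    · exact ⟨ρ0, h⟩
    · exact ⟨(starRingEnd ℂ).comp ρ0, by
        by_contra h2; exact h ((hΦ ρ0).mpr h2)⟩
  have hρx : ρ x = φ := hx ρ hρ
  have hall : ∀ σ : K →+* ℂ, σ x = φ ∨ σ x = (starRingEnd ℂ) φ := by
    intro σ
    by_cases h : σ ∈ Φ
    · exact Or.inl (hx σ h)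
    · right
      have hσ : (starRingEnd ℂ).comp σ ∈ Φ := by
        by_contra h2; exact h ((hΦ σ).mpr h2)
      have h1 : (starRingEnd ℂ) (σ x) = φ := hx _ hσ
      calc σ x = (starRingEnd ℂ) ((starRingEnd ℂ) (σ x)) := (Complex.conj_conj _).symm
        _ = (starRingEnd ℂ) φ := by rw [h1]
  have hroot : (minpoly ℚ x).rootSet ℂ = {φ, (starRingEnd ℂ) φ} := by
    rw [← NumberField.Embeddings.range_eval_eq_rootSet_minpoly K ℂ x]
    ext z
    simp only [Set.mem_range, Set.mem_insert_iff, Set.mem_singleton_iff]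
    constructor
    · rintro ⟨σ, rfl⟩; exact hall σ
    · rintro (rfl | rfl)
      · exact ⟨ρ, hρx⟩
      · exact ⟨(starRingEnd ℂ).comp ρ, by simp [hρx]⟩
  have hx0 : IsIntegral ℚ x := Algebra.IsIntegral.isIntegral x
  have hsep : (minpoly ℚ x).Separable := (minpoly.irreducible hx0).separable
  have hdegx : (minpoly ℚ x).natDegree = 2 := by
    rw [← Polynomial.card_rootSet_eq_natDegree (K := ℂ) hsep
      (IsAlgClosed.splits ((minpoly ℚ x).map (algebraMap ℚ ℂ)))]
    rw [← Nat.card_eq_fintype_card, Nat.card_coe_set_eq, hroot]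
    exact Set.ncard_pair hconj
  have hmin : minpoly ℚ x = minpoly ℚ φ := by
    rw [← hρx]
    exact (minpoly.algHom_eq ρ.toRatAlgHom ρ.injective x).symm
  exact ⟨hmin ▸ hdegx, hdegx, hmin⟩
end

section
/- Let K be a CM field with totally real subfield K₀ and g = [K₀:ℚ], and let Φ̄ be a CM half-set of embeddings of K. Suppose x ∈ K and φ ∈ ℂ \ ℝ satisfy ρ(x) = φ for every ρ ∈ Φ̄, and suppose P, Q ∈ K₀ satisfy x² = P·x + Q. Then P and Q lie in ℚ, with P = Tr_{K₀/ℚ}(P)/g and Q = Tr_{K₀/ℚ}(Q)/g, and moreover φ² = P·φ + Q holds in ℂ; in particular the fields ℚ(x) ⊆ K and ℚ(φ) ⊆ ℂ are isomorphic. -/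
/-- Let `K` be a CM field with totally real subfield `K₀` and `g = [K₀:ℚ]`,
and let `Φ` be a CM half-set of embeddings of `K`.  Suppose `x ∈ K` and `φ ∈ ℂ \ ℝ`
satisfy `ρ(x) = φ` for every `ρ ∈ Φ`, and suppose `P, Q ∈ K₀` satisfy `x² = P·x + Q`.
Then `P` and `Q` lie in `ℚ`, with `P = Tr_{K₀/ℚ}(P)/g` and `Q = Tr_{K₀/ℚ}(Q)/g`,
and moreover `φ² = P·φ + Q` holds in `ℂ`; in particular the fields `ℚ(x) ⊆ K` and
`ℚ(φ) ⊆ ℂ` are isomorphic. -/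
theorem stmt3 (K₀ K : Type*) [Field K₀] [Field K] [NumberField K₀] [NumberField K]
    [Algebra K₀ K]
    -- K₀ is totally real
    (htotreal : ∀ σ : K₀ →+* ℂ, ∀ a : K₀, (σ a).im = 0)
    -- [K : K₀] = 2
    (hdeg2 : Module.finrank K₀ K = 2)
    -- K is totally imaginary
    (htotim : ∀ ρ : K →+* ℂ, ∃ a : K, (ρ a).im ≠ 0)
    -- Φ is a CM half-set: it contains exactly one of each conjugate pair of embeddings
    (Φ : Finset (K →+* ℂ))
    (hΦ : ∀ ρ : K →+* ℂ, ρ ∈ Φ ↔ (starRingEnd ℂ).comp ρ ∉ Φ)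
    (x : K) (φ : ℂ) (hφ : φ.im ≠ 0)
    (hx : ∀ ρ ∈ Φ, ρ x = φ)
    (P Q : K₀)
    (hPQ : x ^ 2 = algebraMap K₀ K P * x + algebraMap K₀ K Q) :
    algebraMap ℚ K₀ (Algebra.trace ℚ K₀ P / (Module.finrank ℚ K₀ : ℚ)) = P ∧
    algebraMap ℚ K₀ (Algebra.trace ℚ K₀ Q / (Module.finrank ℚ K₀ : ℚ)) = Q ∧
    φ ^ 2 = ((Algebra.trace ℚ K₀ P / (Module.finrank ℚ K₀ : ℚ) : ℚ) : ℂ) * φ +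
        ((Algebra.trace ℚ K₀ Q / (Module.finrank ℚ K₀ : ℚ) : ℚ) : ℂ) ∧
    Nonempty ((IntermediateField.adjoin ℚ ({x} : Set K)) ≃+*
        (IntermediateField.adjoin ℚ ({φ} : Set ℂ))) := by
  classical
  haveI : IsScalarTower ℚ K₀ K :=
    IsScalarTower.of_algebraMap_eq' (Subsingleton.elim _ _)
  -- from any embedding of K in Φ or its conjugate in Φ, get the quadratic for φ
  have keyρ : ∀ ρ : K →+* ℂ,
      φ ^ 2 = ρ (algebraMap K₀ K P) * φ + ρ (algebraMap K₀ K Q) := by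
    intro ρ
    by_cases h : ρ ∈ Φ
    · have hxρ := hx ρ h
      have := congrArg ρ hPQ
      simpa [map_pow, map_add, map_mul, hxρ] using this
    · have h2 : (starRingEnd ℂ).comp ρ ∈ Φ := by
        by_contra h3
        exact h ((hΦ ρ).mpr h3)
      have hxρ := hx _ h2
      simp only [RingHom.coe_comp, Function.comp_apply] at hxρ
      have := congrArg ((starRingEnd ℂ).comp ρ) hPQ
      simp only [RingHom.coe_comp, Function.comp_apply, map_pow, map_add, map_mul] at this
      rw [hxρ] at this
      have hreal : ∀ a : K₀, (starRingEnd ℂ) (ρ (algebraMap K₀ K a)) = ρ (algebraMap K₀ K a) := by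
        intro a
        have : ((ρ.comp (algebraMap K₀ K)) a).im = 0 := htotreal _ a
        exact Complex.conj_eq_iff_im.mpr this
      rw [hreal P, hreal Q] at this
      exact this
  -- every embedding of K₀ extends to an embedding of K
  have keyσ : ∀ σ : K₀ →+* ℂ, φ ^ 2 = σ P * φ + σ Q := by
    intro σ
    letI : Algebra K₀ ℂ := σ.toAlgebra
    haveI : Algebra.IsAlgebraic K₀ K := by
      constructor
      intro a
      have : IsAlgebraic ℚ a := (NumberField.isAlgebraic K).isAlgebraic a
      exact (this.tower_top K₀)
    obtain ⟨ρ⟩ : Nonempty (K →ₐ[K₀] ℂ) := ⟨IsAlgClosed.lift⟩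
    have hcomp : ∀ a : K₀, ρ.toRingHom (algebraMap K₀ K a) = σ a := fun a => ρ.commutes a
    have := keyρ ρ.toRingHom
    rw [hcomp P, hcomp Q] at this
    exact this
  -- fix a base embedding
  obtain ⟨σ₀⟩ : Nonempty (K₀ →+* ℂ) := inferInstance
  -- all embeddings agree on P and Q
  have hagree : ∀ σ : K₀ →+* ℂ, σ P = σ₀ P ∧ σ Q = σ₀ Q := by
    intro σ
    have h1 := keyσ σ
    have h2 := keyσ σ₀
    have heq : σ P * φ + σ Q = σ₀ P * φ + σ₀ Q := by rw [← h1, ← h2]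
    have himP : (σ P).im = 0 := htotreal σ P
    have himP0 : (σ₀ P).im = 0 := htotreal σ₀ P
    have himQ : (σ Q).im = 0 := htotreal σ Q
    have himQ0 : (σ₀ Q).im = 0 := htotreal σ₀ Q
    have him := congrArg Complex.im heq
    simp only [Complex.add_im, Complex.mul_im, himP, himP0, himQ, himQ0] at him
    have hre : (σ P).re = (σ₀ P).re := by
      field_simp at him
      have h' : ((σ P).re - (σ₀ P).re) * φ.im = 0 := by linarith
      rcases mul_eq_zero.mp h' with h | h
      · linarith
      · exact absurd h hφ
    have hP : σ P = σ₀ P := Complex.ext hre (by rw [himP, himP0])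
    refine ⟨hP, ?_⟩
    have := heq
    rw [hP] at this
    exact add_left_cancel this
  set g : ℚ := (Module.finrank ℚ K₀ : ℚ) with hg
  have hg0 : g ≠ 0 := by
    simp [hg, Module.finrank_pos.ne']
  -- trace computation
  have htr : ∀ y : K₀, (∀ σ : K₀ →+* ℂ, σ y = σ₀ y) →
      ((Algebra.trace ℚ K₀ y : ℚ) : ℂ) = g * σ₀ y := by
    intro y hy
    have := trace_eq_sum_embeddings (K := ℚ) (L := K₀) (E := ℂ) (x := y)
    rw [show (algebraMap ℚ ℂ) = (Rat.castHom ℂ) from Subsingleton.elim _ _] at this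
    have hsum : ∑ σ : K₀ →ₐ[ℚ] ℂ, σ y = (Fintype.card (K₀ →ₐ[ℚ] ℂ)) * σ₀ y := by
      rw [Finset.sum_congr rfl (fun σ _ => hy σ.toRingHom)]
      simp [Finset.sum_const, nsmul_eq_mul]
    rw [hsum] at this
    have hcard : (Fintype.card (K₀ →ₐ[ℚ] ℂ)) = Module.finrank ℚ K₀ := AlgHom.card ℚ K₀ ℂ
    rw [hcard] at this
    simpa [hg] using this
  have htrP := htr P (fun σ => (hagree σ).1)
  have htrQ := htr Q (fun σ => (hagree σ).2)
  have hgC : (g : ℂ) ≠ 0 := by exact_mod_cast hg0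
  have hσ₀P : ((Algebra.trace ℚ K₀ P / g : ℚ) : ℂ) = σ₀ P := by
    rw [Rat.cast_div, htrP]
    field_simp
  have hσ₀Q : ((Algebra.trace ℚ K₀ Q / g : ℚ) : ℂ) = σ₀ Q := by
    rw [Rat.cast_div, htrQ]
    field_simp
  have hratσ₀ : ∀ q : ℚ, σ₀ (algebraMap ℚ K₀ q) = (q : ℂ) := by
    intro q
    rw [show (algebraMap ℚ K₀) q = (q : K₀) by simp [eq_ratCast]]
    exact map_ratCast σ₀ q
  have hPrat : algebraMap ℚ K₀ (Algebra.trace ℚ K₀ P / g) = P := by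
    apply σ₀.injective
    rw [hratσ₀, hσ₀P]
  have hQrat : algebraMap ℚ K₀ (Algebra.trace ℚ K₀ Q / g) = Q := by
    apply σ₀.injective
    rw [hratσ₀, hσ₀Q]
  refine ⟨hPrat, hQrat, ?_, ?_⟩
  · rw [hσ₀P, hσ₀Q]; exact keyσ σ₀
  · -- isomorphism of adjoined fields
    obtain ⟨ρ0⟩ : Nonempty (K →+* ℂ) := inferInstance
    obtain ⟨ρ, hρΦ⟩ : ∃ ρ : K →+* ℂ, ρ ∈ Φ := by
      by_cases h : ρ0 ∈ Φ
      · exact ⟨ρ0, h⟩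
      · exact ⟨_, by_contra fun h3 => h ((hΦ ρ0).mpr h3)⟩
    have hρx : ρ x = φ := hx ρ hρΦ
    let ρa : K →ₐ[ℚ] ℂ := RingHom.equivRatAlgHom K ℂ ρ
    have hρa : ∀ a : K, ρa a = ρ a := fun a => rfl
    have hmap : (IntermediateField.adjoin ℚ ({x} : Set K)).map ρa =
        IntermediateField.adjoin ℚ ({φ} : Set ℂ) := by
      rw [IntermediateField.adjoin_map]
      congr 1
      simp [hρa, hρx]
    exact ⟨((IntermediateField.equivMap (IntermediateField.adjoin ℚ ({x} : Set K)) ρa).trans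
      (IntermediateField.equivOfEq hmap)).toRingEquiv⟩
end

section
/- Let d be a positive rational number that is not the square of a rational number, fix the real square root √d > 0, and let p, q ∈ ℚ. Set α = p + q√d ∈ ℝ and α' = p − q√d ∈ ℝ, and assume α is not the square of an element of the real quadratic field ℚ(√d) ⊂ ℝ. Let θ ∈ ℂ satisfy θ² = α and let K = ℚ(√d, θ) ⊂ ℂ, a degree-4 extension of ℚ. Then K is totally imaginary (no ring embedding K → ℂ has image contained in ℝ) if and only if both α < 0 and α' < 0. -/
open Polynomial IntermediateField

/-- The subfield of real complex numbers, as an intermediate field of `ℚ ⊆ ℂ`. -/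
noncomputable def realSub : IntermediateField ℚ ℂ where
  carrier := {z : ℂ | z.im = 0}
  mul_mem' := by
    intro a b ha hb
    simp only [Set.mem_setOf_eq, Complex.mul_im] at *
    rw [ha, hb]; ring
  add_mem' := by
    intro a b ha hb
    simp only [Set.mem_setOf_eq, Complex.add_im] at *
    rw [ha, hb]; ring
  algebraMap_mem' := by
    intro r
    simp [Complex.ratCast_im]
  inv_mem' := by
    intro a ha
    simp only [Set.mem_setOf_eq, Complex.inv_im] at *
    rw [ha]; simp

set_option maxHeartbeats 1000000 in
/-- Let `d` be a positive rational that is not the square of a rational,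
fix the real square root `√d > 0`, and let `p, q ∈ ℚ`.  Set `α = p + q√d` and
`α' = p − q√d`, and assume `α` is not the square of an element of the real quadratic
field `ℚ(√d) ⊂ ℝ`.  Let `θ ∈ ℂ` satisfy `θ² = α` and let `K = ℚ(√d, θ) ⊂ ℂ`, a
degree-4 extension of `ℚ`.  Then `K` is totally imaginary iff `α < 0` and `α' < 0`. -/
theorem stmt15 (d : ℚ) (hd : 0 < d) (hdsq : ¬∃ r : ℚ, r ^ 2 = d)
    (p q : ℚ) (α α' : ℝ)
    (hα : α = (p : ℝ) + (q : ℝ) * Real.sqrt d)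
    (hα' : α' = (p : ℝ) - (q : ℝ) * Real.sqrt d)
    (hnotsq : ¬∃ y ∈ IntermediateField.adjoin ℚ ({Real.sqrt d} : Set ℝ), y ^ 2 = α)
    (θ : ℂ) (hθ : θ ^ 2 = (α : ℂ))
    (K : IntermediateField ℚ ℂ)
    (hK : K = IntermediateField.adjoin ℚ ({((Real.sqrt d : ℝ) : ℂ), θ} : Set ℂ))
    (hdeg : Module.finrank ℚ K = 4) :
    (∀ ρ : K →+* ℂ, ∃ a : K, (ρ a).im ≠ 0) ↔ (α < 0 ∧ α' < 0) := by
  have hdR : (0:ℝ) < (d:ℝ) := by exact_mod_cast hd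
  have hs2 : Real.sqrt (d:ℝ) ^ 2 = (d:ℝ) := Real.sq_sqrt hdR.le
  have hαne : α ≠ 0 := by
    intro h
    exact hnotsq ⟨0, zero_mem _, by simp [h]⟩
  have hα'ne : α' ≠ 0 := by
    intro h
    have hpq : (p:ℝ) = (q:ℝ) * Real.sqrt d := by
      have := hα'.symm.trans h; linarith
    by_cases hq : q = 0
    · subst hq
      simp only [Rat.cast_zero, zero_mul] at hpq
      exact hαne (by rw [hα, hpq]; simp)
    · apply hdsq
      refine ⟨p / q, ?_⟩
      have hqR : (q:ℝ) ≠ 0 := by exact_mod_cast hq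
      have h1 : ((p/q : ℚ):ℝ) = Real.sqrt d := by push_cast; field_simp; linarith
      have h2 : ((p/q:ℚ):ℝ)^2 = (d:ℝ) := by rw [h1]; exact hs2
      exact_mod_cast h2
  have hsdmem : ((Real.sqrt d : ℝ) : ℂ) ∈ K := by
    rw [hK]; exact IntermediateField.subset_adjoin ℚ _ (by simp)
  have hθmem : θ ∈ K := by
    rw [hK]; exact IntermediateField.subset_adjoin ℚ _ (by simp)
  constructor
  · -- totally imaginary → α < 0 ∧ α' < 0
    intro h
    by_contra hcon
    have hreal : ∃ ρ : K →+* ℂ, ∀ a : K, (ρ a).im = 0 := by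
      by_cases hαpos : 0 < α
      · -- θ is real, so K ⊆ ℝ and the inclusion works
        have hθim : θ.im = 0 := by
          have e1 : (θ^2).im = 0 := by rw [hθ]; simp
          have e2 : (θ^2).re = α := by rw [hθ]; simp
          rw [pow_two, Complex.mul_im] at e1
          rw [pow_two, Complex.mul_re] at e2
          by_contra him
          have hre : θ.re = 0 := by
            rcases mul_eq_zero.mp (by linarith : θ.re * θ.im = 0) with h | h
            · exact h
            · exact absurd h him
          nlinarith [sq_nonneg θ.im]
        have hle : K ≤ realSub := by
          rw [hK, IntermediateField.adjoin_le_iff]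
          rintro x hx
          rcases hx with rfl | rfl
          · show Complex.im _ = 0; simp
          · exact hθim
        exact ⟨(IntermediateField.val K).toRingHom, fun a => hle a.2⟩
      · -- α < 0, hence α' > 0 and q ≠ 0
        have hαneg : α < 0 := lt_of_le_of_ne (not_lt.mp hαpos) hαne
        have hα'pos : 0 < α' := by
          rcases lt_or_gt_of_ne hα'ne with h | h
          · exact absurd ⟨hαneg, h⟩ hcon
          · exact h
        have hq : q ≠ 0 := by
          intro h
          rw [h] at hα hα'
          simp at hα hα'
          rw [hα] at hαneg; rw [hα'] at hα'pos
          linarith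
        have hqC : (q:ℂ) ≠ 0 := by exact_mod_cast hq
        -- K = ℚ(θ)
        have hKE : K = ℚ⟮θ⟯ := by
          rw [hK]
          apply le_antisymm
          · rw [IntermediateField.adjoin_le_iff]
            rintro x hx
            rcases hx with rfl | rfl
            · have hθE : θ ∈ ℚ⟮θ⟯ := IntermediateField.mem_adjoin_simple_self ℚ θ
              have e : ((Real.sqrt d:ℝ):ℂ) = (θ^2 - (p:ℂ)) * ((q:ℂ))⁻¹ := by
                rw [hθ, hα]
                push_cast
                field_simp; ring
              rw [e]
              refine mul_mem (sub_mem (pow_mem hθE 2) ?_) (inv_mem ?_)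
              · exact_mod_cast IntermediateField.algebraMap_mem ℚ⟮θ⟯ p
              · exact_mod_cast IntermediateField.algebraMap_mem ℚ⟮θ⟯ q
            · exact IntermediateField.mem_adjoin_simple_self ℚ _
          · rw [IntermediateField.adjoin_le_iff]
            rintro x hx
            rw [Set.mem_singleton_iff] at hx
            subst hx
            exact IntermediateField.subset_adjoin ℚ _ (by simp)
        -- the minimal polynomial of θ
        set g : ℚ[X] := X^4 - C (2*p) * X^2 + C (p^2 - d*q^2) with hg
        have hgmonic : g.Monic := by rw [hg]; monicity!
        have hgdeg : g.natDegree = 4 := by rw [hg]; compute_degree!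
        have hgθ : Polynomial.aeval θ g = 0 := by
          have hre : α^2 - 2*(p:ℝ)*α + ((p:ℝ)^2 - (d:ℝ)*(q:ℝ)^2) = 0 := by
            rw [hα]; nlinarith [hs2]
          have e : (Polynomial.aeval θ) g = ((α^2 - 2*(p:ℝ)*α + ((p:ℝ)^2 - (d:ℝ)*(q:ℝ)^2) : ℝ) : ℂ) := by
            simp only [hg, map_add, map_sub, map_mul, map_pow, Polynomial.aeval_X,
              Polynomial.aeval_C, eq_ratCast]
            rw [show θ^4 = ((α:ℝ):ℂ)^2 by rw [← hθ]; ring, hθ]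
            push_cast
            ring
          rw [e, hre]
          simp
        have hint : IsIntegral ℚ θ := ⟨g, hgmonic, by rwa [← Polynomial.aeval_def]⟩
        have hmin : minpoly ℚ θ = g := by
          refine (Polynomial.eq_of_monic_of_dvd_of_natDegree_le (minpoly.monic hint) hgmonic
            (minpoly.dvd ℚ θ hgθ) ?_).symm
          rw [hgdeg, ← IntermediateField.adjoin.finrank hint]
          rw [← hKE, hdeg]
        -- the real root √α'
        have hx : Real.sqrt α' ∈ (minpoly ℚ θ).aroots ℝ := by
          rw [Polynomial.mem_aroots]
          refine ⟨minpoly.ne_zero hint, ?_⟩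
          rw [hmin]
          have hx2 : Real.sqrt α' ^ 2 = α' := Real.sq_sqrt hα'pos.le
          have key : α'^2 - 2*(p:ℝ)*α' + ((p:ℝ)^2 - (d:ℝ)*(q:ℝ)^2) = 0 := by
            rw [hα']; nlinarith [hs2]
          simp only [hg, map_add, map_sub, map_mul, map_pow, Polynomial.aeval_X,
            Polynomial.aeval_C, eq_ratCast]
          rw [show Real.sqrt α' ^ 4 = (Real.sqrt α' ^ 2) ^ 2 by ring, hx2]
          push_cast at key ⊢
          linarith [key]
        let φ : ℚ⟮θ⟯ →ₐ[ℚ] ℝ :=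
          (IntermediateField.algHomAdjoinIntegralEquiv ℚ (K := ℝ) hint).symm ⟨_, hx⟩
        refine ⟨Complex.ofRealHom.comp (φ.toRingHom.comp
          ((IntermediateField.equivOfEq hKE : K ≃ₐ[ℚ] ℚ⟮θ⟯) : K →+* ℚ⟮θ⟯)), fun a => ?_⟩
        simp [Complex.ofRealHom]
    obtain ⟨ρ, hρ⟩ := hreal
    obtain ⟨a, ha⟩ := h ρ
    exact ha (hρ a)
  · -- α < 0 ∧ α' < 0 → totally imaginary
    rintro ⟨h1, h2⟩ ρ
    refine ⟨⟨θ, hθmem⟩, ?_⟩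
    set w : ℂ := ρ ⟨((Real.sqrt d : ℝ) : ℂ), hsdmem⟩ with hw
    set z : ℂ := ρ ⟨θ, hθmem⟩ with hz
    have hw2 : w ^ 2 = ((d:ℝ):ℂ) := by
      rw [hw, ← map_pow]
      have e : (⟨((Real.sqrt d:ℝ):ℂ), hsdmem⟩ : K) ^ 2 = ((d:ℚ) : K) := by
        ext
        push_cast
        exact_mod_cast congrArg (fun x : ℝ => (x : ℂ)) hs2
      rw [e, map_ratCast]
      push_cast; ring
    have hww : w = ((Real.sqrt d:ℝ):ℂ) ∨ w = -((Real.sqrt d:ℝ):ℂ) := by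
      have hsc : (((Real.sqrt d:ℝ):ℂ)) ^ 2 = ((d:ℝ):ℂ) := by
        exact_mod_cast congrArg (fun x : ℝ => (x : ℂ)) hs2
      have h0 : (w - ((Real.sqrt d:ℝ):ℂ)) * (w + ((Real.sqrt d:ℝ):ℂ)) = 0 := by
        linear_combination hw2 - hsc
      rcases mul_eq_zero.mp h0 with h | h
      · left; linear_combination h
      · right; linear_combination h
    have hz2 : z ^ 2 = (p:ℂ) + (q:ℂ) * w := by
      rw [hz, hw, ← map_pow]
      have e : (⟨θ, hθmem⟩ : K) ^ 2 =
          ((p:ℚ) : K) + ((q:ℚ) : K) * ⟨((Real.sqrt d:ℝ):ℂ), hsdmem⟩ := by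
        ext
        push_cast
        rw [hθ, hα]
        push_cast; ring
      rw [e]
      push_cast [map_add, map_mul, map_ratCast]
      ring
    -- so z^2 is a negative real
    have hzreal : ∃ β : ℝ, β < 0 ∧ z ^ 2 = (β : ℂ) := by
      rcases hww with h | h
      · exact ⟨α, h1, by rw [hz2, h, hα]; push_cast; ring⟩
      · exact ⟨α', h2, by rw [hz2, h, hα']; push_cast; ring⟩
    obtain ⟨β, hβ, hzβ⟩ := hzreal
    intro him
    have hre : (z ^ 2).re = z.re ^ 2 := by
      rw [pow_two, Complex.mul_re, him]; ring
    rw [hzβ] at hre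
    simp only [Complex.ofReal_re] at hre
    nlinarith [sq_nonneg z.re]
end

section
/- Let ζ = exp(2πi/8) ∈ ℂ and K = ℚ(ζ) ⊂ ℂ, the 8th cyclotomic field. Let φ₁ : K → ℂ be the inclusion and φ₅ : K → ℂ the unique ring embedding with φ₅(ζ) = ζ⁵. Then the subfield of ℂ generated over ℚ by the set {φ₁(x) + φ₅(x) : x ∈ K} equals ℚ(i), the quadratic imaginary field generated by i = ζ². -/
/-- Let `ζ = exp(2πi/8)` and `K = ℚ(ζ) ⊂ ℂ`, the 8th cyclotomic field.
Let `φ₁ : K → ℂ` be the inclusion and `φ₅ : K → ℂ` the ring embedding with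
`φ₅(ζ) = ζ⁵`.  Then the subfield of `ℂ` generated over `ℚ` by
`{φ₁(x) + φ₅(x) : x ∈ K}` equals `ℚ(i)`, the quadratic imaginary field generated by
`i = ζ²`. -/
theorem stmt16 (ζ : ℂ) (hζ : ζ = Complex.exp (2 * Real.pi * Complex.I / 8))
    (K : IntermediateField ℚ ℂ) (hK : K = IntermediateField.adjoin ℚ ({ζ} : Set ℂ))
    (hζK : ζ ∈ K)
    (φ₅ : K →+* ℂ) (hφ₅ : φ₅ ⟨ζ, hζK⟩ = ζ ^ 5) :
    IntermediateField.adjoin ℚ {z : ℂ | ∃ x : K, z = (x : ℂ) + φ₅ x} =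
      IntermediateField.adjoin ℚ ({Complex.I} : Set ℂ) := by
  have hζ2 : ζ ^ 2 = Complex.I := by
    rw [hζ, ← Complex.exp_nat_mul]
    have : ((2 : ℕ) : ℂ) * (2 * Real.pi * Complex.I / 8) = (Real.pi / 2 : ℝ) * Complex.I := by
      push_cast; ring
    rw [this, Complex.exp_mul_I]
    push_cast
    rw [Complex.cos_pi_div_two, Complex.sin_pi_div_two]
    ring
  have hζ4 : ζ ^ 4 = -1 := by
    have : ζ ^ 4 = (ζ ^ 2) ^ 2 := by ring
    rw [this, hζ2, Complex.I_sq]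
  have hζ5 : ζ ^ 5 = -ζ := by
    have : ζ ^ 5 = ζ ^ 4 * ζ := by ring
    rw [this, hζ4]; ring
  set ζ' : K := ⟨ζ, hζK⟩ with hζ'
  have key : ∀ m : ℕ, ζ ^ m + (ζ ^ 5) ^ m ∈ IntermediateField.adjoin ℚ ({Complex.I} : Set ℂ) := by
    intro m
    have hImem : Complex.I ∈ IntermediateField.adjoin ℚ ({Complex.I} : Set ℂ) :=
      IntermediateField.subset_adjoin ℚ _ rfl
    rw [hζ5]
    rcases Nat.even_or_odd m with he | ho
    · obtain ⟨k, hk⟩ := he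
      have h1 : ζ ^ m = Complex.I ^ k := by
        rw [hk, ← two_mul, pow_mul, hζ2]
      have h2 : ζ ^ m + (-ζ) ^ m = 2 * Complex.I ^ k := by
        rw [(Even.neg_pow ⟨k, hk⟩ ζ), h1]; ring
      rw [h2]
      refine mul_mem ?_ (pow_mem hImem k)
      exact_mod_cast IntermediateField.intCast_mem (IntermediateField.adjoin ℚ {Complex.I}) 2
    · have h0 : ζ ^ m + (-ζ) ^ m = 0 := by
        rw [Odd.neg_pow ho ζ]; ring
      rw [h0]; exact zero_mem _
  apply le_antisymm
  · rw [IntermediateField.adjoin_le_iff]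
    rintro z ⟨x, rfl⟩
    simp only [SetLike.mem_coe]
    have hint : IsIntegral ℚ ζ := by
      refine ⟨Polynomial.X ^ 8 - Polynomial.C 1, ?_, ?_⟩
      · exact Polynomial.monic_X_pow_sub_C _ (by norm_num)
      · simp only [Polynomial.eval₂_sub, Polynomial.eval₂_X_pow, Polynomial.eval₂_one,
          Polynomial.eval₂_C]
        have : ζ ^ 8 = (ζ ^ 4) ^ 2 := by ring
        rw [this, hζ4]; norm_num
    have hx : (x : ℂ) ∈ Algebra.adjoin ℚ ({ζ} : Set ℂ) := by
      have h1 : (x : ℂ) ∈ IntermediateField.adjoin ℚ ({ζ} : Set ℂ) := by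
        rw [← hK]; exact x.2
      have h2 : (x : ℂ) ∈ (IntermediateField.adjoin ℚ ({ζ} : Set ℂ)).toSubalgebra := h1
      rwa [IntermediateField.adjoin_simple_toSubalgebra_of_isAlgebraic hint.isAlgebraic] at h2
    rw [Algebra.adjoin_singleton_eq_range_aeval] at hx
    obtain ⟨p, hp⟩ := hx
    have hxK : x = Polynomial.aeval ζ' p := by
      apply Subtype.ext
      rw [← hp]
      have : ((Polynomial.aeval ζ' p : K) : ℂ) = Polynomial.aeval (K.val ζ') p :=
        (Polynomial.aeval_algHom_apply K.val ζ' p).symm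
      rw [this]; rfl
    have hcoe : φ₅.toRatAlgHom ζ' = ζ ^ 5 := hφ₅
    have hφx : φ₅ x = Polynomial.aeval (ζ ^ 5) p := by
      have h := Polynomial.aeval_algHom_apply φ₅.toRatAlgHom ζ' p
      rw [hcoe] at h
      rw [hxK]
      exact h.symm
    have hvx : (x : ℂ) = Polynomial.aeval ζ p := hp.symm
    rw [hvx, hφx]
    clear hp hxK hφx hvx
    induction p using Polynomial.induction_on with
    | C a =>
        simp only [Polynomial.aeval_C]
        have : (algebraMap ℚ ℂ) a + (algebraMap ℚ ℂ) a = algebraMap ℚ ℂ (2 * a) := by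
          rw [map_mul, map_ofNat]; ring
        rw [this]
        exact IntermediateField.algebraMap_mem _ _
    | add p q hp' hq' =>
        simp only [map_add]
        have : Polynomial.aeval ζ p + Polynomial.aeval ζ q +
            (Polynomial.aeval (ζ ^ 5) p + Polynomial.aeval (ζ ^ 5) q) =
            (Polynomial.aeval ζ p + Polynomial.aeval (ζ ^ 5) p) +
            (Polynomial.aeval ζ q + Polynomial.aeval (ζ ^ 5) q) := by ring
        rw [this]
        exact add_mem hp' hq'
    | monomial n a _ =>
        simp only [map_mul, Polynomial.aeval_C, map_pow, Polynomial.aeval_X]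
        have : (algebraMap ℚ ℂ) a * ζ ^ (n + 1) + (algebraMap ℚ ℂ) a * (ζ ^ 5) ^ (n + 1) =
            a • (ζ ^ (n + 1) + (ζ ^ 5) ^ (n + 1)) := by
          rw [Algebra.smul_def]; ring
        rw [this]
        exact IntermediateField.smul_mem _ (key (n + 1))
  · rw [IntermediateField.adjoin_le_iff]
    rintro z (rfl : z = Complex.I)
    simp only [SetLike.mem_coe]
    have hmem : (ζ : ℂ) ^ 2 + φ₅ (ζ' ^ 2) ∈
        IntermediateField.adjoin ℚ {z : ℂ | ∃ x : K, z = (x : ℂ) + φ₅ x} := by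
      apply IntermediateField.subset_adjoin
      exact ⟨ζ' ^ 2, by push_cast [hζ']; ring_nf⟩
    have hval : φ₅ (ζ' ^ 2) = Complex.I := by
      rw [map_pow, hφ₅, ← pow_mul]
      have : ζ ^ (5 * 2) = ζ ^ 2 * (ζ ^ 4) ^ 2 := by ring
      rw [this, hζ4, hζ2]; ring
    rw [hζ2, hval] at hmem
    have h2 : Complex.I = (2⁻¹ : ℚ) • (Complex.I + Complex.I) := by
      rw [Rat.smul_def]; push_cast; ring
    rw [h2]
    exact IntermediateField.smul_mem _ hmem
end

section
/- Let ζ = exp(2πi/10) ∈ ℂ and K = ℚ(ζ) ⊂ ℂ, the 10th cyclotomic field. Let φ₁ : K → ℂ be the inclusion and φ₇ : K → ℂ the unique ring embedding with φ₇(ζ) = ζ⁷. Then the subfield of ℂ generated over ℚ by the set {φ₁(x) + φ₇(x) : x ∈ K} equals K = ℚ(ζ) itself, a degree-4 extension of ℚ. -/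
open IntermediateField Polynomial

set_option maxHeartbeats 1000000 in
/-- Let `ζ = exp(2πi/10)` and `K = ℚ(ζ) ⊂ ℂ`, the 10th cyclotomic field.
Let `φ₁ : K → ℂ` be the inclusion and `φ₇ : K → ℂ` the ring embedding with
`φ₇(ζ) = ζ⁷`.  Then the subfield of `ℂ` generated over `ℚ` by
`{φ₁(x) + φ₇(x) : x ∈ K}` equals `K = ℚ(ζ)` itself, a degree-4 extension of `ℚ`. -/
theorem stmt18 (ζ : ℂ) (hζ : ζ = Complex.exp (2 * Real.pi * Complex.I / 10))
    (K : IntermediateField ℚ ℂ) (hK : K = IntermediateField.adjoin ℚ ({ζ} : Set ℂ))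
    (hζK : ζ ∈ K)
    (φ₇ : K →+* ℂ) (hφ₇ : φ₇ ⟨ζ, hζK⟩ = ζ ^ 7) :
    IntermediateField.adjoin ℚ {z : ℂ | ∃ x : K, z = (x : ℂ) + φ₇ x} = K ∧
      Module.finrank ℚ K = 4 := by
  subst hK
  have hprim : IsPrimitiveRoot ζ 10 := by
    rw [hζ]
    convert Complex.isPrimitiveRoot_exp 10 (by norm_num) using 3
    norm_num
  have h10 : ζ ^ 10 = 1 := hprim.pow_eq_one
  have h2ne : ζ ^ 2 ≠ 1 := hprim.pow_ne_one_of_pos_of_lt (by norm_num) (by norm_num)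
  have h5ne : ζ ^ 5 ≠ 1 := hprim.pow_ne_one_of_pos_of_lt (by norm_num) (by norm_num)
  have h5 : ζ ^ 5 = -1 := by
    have hfac : (ζ ^ 5 - 1) * (ζ ^ 5 + 1) = 0 := by linear_combination h10
    rcases mul_eq_zero.1 hfac with h | h
    · exact absurd (by linear_combination h) h5ne
    · linear_combination h
  have hζne : ζ ≠ -1 := by
    intro h
    exact h2ne (by rw [h]; ring)
  have h4 : ζ ^ 4 - ζ ^ 3 + ζ ^ 2 - ζ + 1 = 0 := by
    have hfac : (ζ + 1) * (ζ ^ 4 - ζ ^ 3 + ζ ^ 2 - ζ + 1) = 0 := by linear_combination h5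
    rcases mul_eq_zero.1 hfac with h | h
    · exact absurd (by linear_combination h) hζne
    · exact h
  have hrange : ∀ x : (IntermediateField.adjoin ℚ ({ζ} : Set ℂ)),
      φ₇ x ∈ IntermediateField.adjoin ℚ ({ζ} : Set ℂ) := by
    rintro ⟨x, hx⟩
    induction hx using IntermediateField.adjoin_induction with
    | mem y hy =>
      have hyz : y = ζ := hy
      subst hyz
      show φ₇ ⟨y, hζK⟩ ∈ _
      rw [hφ₇]
      exact pow_mem hζK 7
    | algebraMap q =>
      show φ₇ (algebraMap ℚ _ q) ∈ _
      rw [← RingHom.comp_apply, eq_ratCast]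
      exact SubfieldClass.ratCast_mem _ q
    | add x y hx hy ihx ihy =>
      show φ₇ (⟨x, hx⟩ + ⟨y, hy⟩) ∈ _
      rw [map_add]
      exact add_mem ihx ihy
    | inv x hx ihx =>
      show φ₇ (⟨x, hx⟩ : IntermediateField.adjoin ℚ ({ζ} : Set ℂ))⁻¹ ∈ _
      rw [map_inv₀]
      exact inv_mem ihx
    | mul x y hx hy ihx ihy =>
      show φ₇ (⟨x, hx⟩ * ⟨y, hy⟩) ∈ _
      rw [map_mul]
      exact mul_mem ihx ihy
  have ha : ζ + ζ ^ 7 ∈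
      IntermediateField.adjoin ℚ {z : ℂ | ∃ x : (IntermediateField.adjoin ℚ ({ζ} : Set ℂ)),
        z = (x : ℂ) + φ₇ x} := by
    apply IntermediateField.subset_adjoin
    exact ⟨⟨ζ, hζK⟩, by rw [hφ₇]⟩
  have hb : ζ ^ 3 + ζ ∈
      IntermediateField.adjoin ℚ {z : ℂ | ∃ x : (IntermediateField.adjoin ℚ ({ζ} : Set ℂ)),
        z = (x : ℂ) + φ₇ x} := by
    apply IntermediateField.subset_adjoin
    refine ⟨⟨ζ, hζK⟩ ^ 3, ?_⟩
    have hc : (((⟨ζ, hζK⟩ : IntermediateField.adjoin ℚ ({ζ} : Set ℂ)) ^ 3 :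
        IntermediateField.adjoin ℚ ({ζ} : Set ℂ)) : ℂ) = ζ ^ 3 := rfl
    rw [hc, map_pow, hφ₇, ← pow_mul]
    have h21 : ζ ^ (7 * 3) = ζ := by
      calc ζ ^ (7 * 3) = (ζ ^ 10) ^ 2 * ζ := by ring
      _ = ζ := by rw [h10]; ring
    rw [h21]
  have hζE : ζ ∈
      IntermediateField.adjoin ℚ {z : ℂ | ∃ x : (IntermediateField.adjoin ℚ ({ζ} : Set ℂ)),
        z = (x : ℂ) + φ₇ x} := by
    have key : ζ = ((ζ ^ 3 + ζ) + (ζ + ζ ^ 7) ^ 2 + 1) / 2 := by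
      field_simp
      linear_combination (-(ζ ^ 10 + ζ ^ 9 - ζ ^ 5 + ζ ^ 4 + 2 * ζ ^ 3 + 1)) * h4
    have h2 : ((ζ ^ 3 + ζ) + (ζ + ζ ^ 7) ^ 2 + 1) ∈ _ :=
      add_mem (add_mem hb (pow_mem ha 2)) (one_mem _)
    have h2m : (2 : ℂ) ∈
        IntermediateField.adjoin ℚ {z : ℂ | ∃ x : (IntermediateField.adjoin ℚ ({ζ} : Set ℂ)),
          z = (x : ℂ) + φ₇ x} := by
      rw [show (2 : ℂ) = 1 + 1 by norm_num]
      exact add_mem (one_mem _) (one_mem _)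
    have h3 := div_mem h2 h2m
    rwa [← key] at h3
  constructor
  · apply le_antisymm
    · apply IntermediateField.adjoin_le_iff.2
      rintro z ⟨x, rfl⟩
      exact add_mem x.2 (hrange x)
    · apply IntermediateField.adjoin_le_iff.2
      rintro z hz
      rcases Set.mem_singleton_iff.1 hz with rfl
      exact hζE
  · have hint : IsIntegral ℚ ζ := by
      refine ⟨X ^ 10 - 1, ?_, ?_⟩
      · simpa using monic_X_pow_sub_C (1 : ℚ) (by norm_num)
      · simp [h10]
    have hmin : minpoly ℚ ζ = cyclotomic 10 ℚ :=
      (cyclotomic_eq_minpoly_rat hprim (by norm_num)).symm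
    have hfr := IntermediateField.adjoin.finrank hint
    rw [hmin, natDegree_cyclotomic] at hfr
    rw [hfr]
    decide
end
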